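/- Let (M_b, ∼) be an arbitrage-free market with NA price π and unit zero-coupon bond prices P_t = π(δ_t), and assume: (A1) t ↦ P_t is continuous, bounded and strictly positive on [0,∞); (A2) for every γ ∈ M_b⁺ and all 0 ≤ s < t there exists b with min{P_r : r ∈ [s,t]} ≤ b ≤ max{P_r : r ∈ [s,t]} such that π(γ_{(s,t]}) = b·γ((s,t]), where γ_{(s,t]} is the restriction of γ to (s,t]; (A3) whenever β_k, γ_k ∈ M_b⁺ with β_k ∼ γ_k for all k and both Σ_k β_k and Σ_k γ_k lie in M_b⁺, then Σ_k β_k ∼ Σ_k γ_k. Then for every γ ∈ M_b the uniquely determined no-arbitrage price satisfies the Choquet formula π(γ) = ∫_0^∞ P_t dγ(t), the integral being ∫_0^∞ P_t dγ⁺(t) − ∫_0^∞ P_t dγ⁻(t) for the Jordan decomposition γ = γ⁺ − γ⁻. -/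

import Mathlib

open MeasureTheory
open scoped NNReal

/-- The unit zero-coupon bond with maturity `t`: the Dirac measure at `t`,
as a finite signed Borel measure on `[0,∞)` (modeled as `ℝ≥0`). -/
noncomputable def uzcb (t : ℝ≥0) : SignedMeasure ℝ≥0 :=
  (MeasureTheory.Measure.dirac t).toSignedMeasure

/-- A market of deterministic cash flows: a reflexive, symmetric, additive relation on the
finite signed Borel measures on `[0,∞)` such that every nonzero nonnegative cash flow has at
least one strictly positive spot price. -/
def IsMarket (r : SignedMeasure ℝ≥0 → SignedMeasure ℝ≥0 → Prop) : Prop :=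
  (∀ γ, r γ γ) ∧
  (∀ γ₁ γ₂, r γ₁ γ₂ → r γ₂ γ₁) ∧
  (∀ γ₁ γ₂ γ₃ γ₄, r γ₁ γ₂ → r γ₃ γ₄ → r (γ₁ + γ₃) (γ₂ + γ₄)) ∧
  (∀ γ : SignedMeasure ℝ≥0, 0 ≤ γ → γ ≠ 0 → ∃ b : ℝ, 0 < b ∧ r γ (b • uzcb 0))

/-- No-arbitrage: no nonzero nonnegative cash flow is exchangeable for the null cash flow. -/
def NoArb (r : SignedMeasure ℝ≥0 → SignedMeasure ℝ≥0 → Prop) : Prop :=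
  ¬ ∃ γ : SignedMeasure ℝ≥0, 0 ≤ γ ∧ γ ≠ 0 ∧ r 0 γ

/-- Integral of a function against a finite signed Borel measure, defined via the Jordan
decomposition γ = γ⁺ - γ⁻ as ∫ f dγ⁺ - ∫ f dγ⁻. -/
noncomputable def sInt (f : ℝ≥0 → ℝ) (γ : SignedMeasure ℝ≥0) : ℝ :=
  (∫ t, f t ∂γ.toJordanDecomposition.posPart) -
    ∫ t, f t ∂γ.toJordanDecomposition.negPart

/-- `γ` is the (setwise) sum of the sequence of signed measures `f`. -/
def IsSumOf (γ : SignedMeasure ℝ≥0) (f : ℕ → SignedMeasure ℝ≥0) : Prop :=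
  ∀ A : Set ℝ≥0, MeasurableSet A → HasSum (fun k => f k A) (γ A)

open scoped Classical in
lemma uzcb_apply (t : ℝ≥0) {A : Set ℝ≥0} (hA : MeasurableSet A) :
    uzcb t A = if t ∈ A then 1 else 0 := by
  rw [uzcb, Measure.toSignedMeasure_apply_measurable hA, measureReal_def, Measure.dirac_apply' _ hA]
  split_ifs with h <;> simp [Set.indicator, h]

lemma uzcb_nonneg (t : ℝ≥0) : (0 : SignedMeasure ℝ≥0) ≤ uzcb t := by
  rw [VectorMeasure.le_iff]
  intro A hA
  rw [VectorMeasure.zero_apply, uzcb_apply t hA]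
  split_ifs <;> norm_num

lemma smul_uzcb_nonneg {c : ℝ} (hc : 0 ≤ c) (t : ℝ≥0) :
    (0 : SignedMeasure ℝ≥0) ≤ c • uzcb t := by
  rw [VectorMeasure.le_iff]
  intro A hA
  rw [VectorMeasure.zero_apply, VectorMeasure.smul_apply, uzcb_apply t hA]
  split_ifs <;> simp [hc]

lemma smul_uzcb_ne_zero {c : ℝ} (hc : c ≠ 0) (t : ℝ≥0) : c • uzcb t ≠ 0 := by
  intro h
  have := congrArg (fun v : SignedMeasure ℝ≥0 => v {t}) h
  simp only [VectorMeasure.smul_apply, VectorMeasure.zero_apply,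
    uzcb_apply t (measurableSet_singleton t), Set.mem_singleton_iff, if_pos rfl,
    smul_eq_mul, mul_one] at this
  rw [if_pos trivial, mul_one] at this
  exact hc this

lemma price_unique {r : SignedMeasure ℝ≥0 → SignedMeasure ℝ≥0 → Prop}
    (hM : IsMarket r) (hNA : NoArb r) {γ : SignedMeasure ℝ≥0} {a b : ℝ}
    (ha : r γ (a • uzcb 0)) (hb : r γ (b • uzcb 0)) : a = b := by
  obtain ⟨hrefl, hsym, hadd, -⟩ := hM
  have key : ∀ x y : ℝ, r γ (x • uzcb 0) → r γ (y • uzcb 0) → ¬ x < y := by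
    intro x y hx hy hlt
    have h1 : r (x • uzcb 0 + γ) (γ + y • uzcb 0) := hadd _ _ _ _ (hsym _ _ hx) hy
    have h2 : r (x • uzcb 0 + γ + -γ) (γ + y • uzcb 0 + -γ) := hadd _ _ _ _ h1 (hrefl (-γ))
    have e1 : x • uzcb 0 + γ + -γ = x • uzcb 0 := by abel
    have e2 : γ + y • uzcb 0 + -γ = y • uzcb 0 := by abel
    rw [e1, e2] at h2
    have h3 : r (x • uzcb 0 + -(x • uzcb 0)) (y • uzcb 0 + -(x • uzcb 0)) :=
      hadd _ _ _ _ h2 (hrefl _)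
    have e3 : x • uzcb 0 + -(x • uzcb 0) = 0 := by abel
    have e4 : y • uzcb 0 + -(x • uzcb 0) = (y - x) • uzcb 0 := by
      apply VectorMeasure.ext; intro A hA
      simp only [VectorMeasure.add_apply, VectorMeasure.neg_apply, VectorMeasure.smul_apply, smul_eq_mul]; ring
    rw [e3, e4] at h3
    exact hNA ⟨(y - x) • uzcb 0, smul_uzcb_nonneg (by linarith) 0,
      smul_uzcb_ne_zero (by intro h; apply absurd h; intro h'; linarith) 0, h3⟩
  rcases lt_trichotomy a b with h | h | h
  · exact absurd h (key a b ha hb)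
  · exact h
  · exact absurd h (key b a hb ha)

lemma pi_smul_uzcb {r : SignedMeasure ℝ≥0 → SignedMeasure ℝ≥0 → Prop}
    (hM : IsMarket r) (hNA : NoArb r) {π : SignedMeasure ℝ≥0 → ℝ}
    (hπ : ∀ γ : SignedMeasure ℝ≥0, r γ (π γ • uzcb 0)) (c : ℝ) :
    π (c • uzcb 0) = c :=
  price_unique hM hNA (hπ _) (hM.1 (c • uzcb 0))

lemma pi_add {r : SignedMeasure ℝ≥0 → SignedMeasure ℝ≥0 → Prop}
    (hM : IsMarket r) (hNA : NoArb r) {π : SignedMeasure ℝ≥0 → ℝ}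
    (hπ : ∀ γ : SignedMeasure ℝ≥0, r γ (π γ • uzcb 0)) (x y : SignedMeasure ℝ≥0) :
    π (x + y) = π x + π y :=
  price_unique hM hNA (hπ (x + y))
    (by rw [add_smul]; exact hM.2.2.1 _ _ _ _ (hπ x) (hπ y))

/-- The `k`-th interval of the `n`-th partition of `[0,∞)`. -/
def iv (n k : ℕ) : Set ℝ≥0 :=
  match k with
  | 0 => {0}
  | Nat.succ k => Set.Ioc ((k : ℝ≥0) / ((n : ℝ≥0) + 1)) (((k : ℝ≥0) + 1) / ((n : ℝ≥0) + 1))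

lemma np1_pos (n : ℕ) : (0 : ℝ≥0) < (n : ℝ≥0) + 1 := by positivity

lemma iv_measurable (n k : ℕ) : MeasurableSet (iv n k) := by
  cases k with
  | zero => exact measurableSet_singleton 0
  | succ k => exact measurableSet_Ioc

lemma mem_iv_succ_iff {n k : ℕ} {t : ℝ≥0} :
    t ∈ iv n (k + 1) ↔ (k : ℝ≥0) < t * ((n : ℝ≥0) + 1) ∧ t * ((n : ℝ≥0) + 1) ≤ (k : ℝ≥0) + 1 := by
  simp only [iv, Set.mem_Ioc]
  rw [div_lt_iff₀ (np1_pos n), le_div_iff₀ (np1_pos n)]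

lemma iv_succ_pos {n k : ℕ} {t : ℝ≥0} (ht : t ∈ iv n (k + 1)) : 0 < t := by
  rcases mem_iv_succ_iff.1 ht with ⟨h1, -⟩
  by_contra h
  push_neg at h
  have : t = 0 := le_antisymm h zero_le
  rw [this, zero_mul] at h1
  exact absurd h1 (by simp)

lemma iv_lt_aux {n i j : ℕ} (hij : i < j) {t : ℝ≥0} (hti : t ∈ iv n i) (htj : t ∈ iv n j) :
    False := by
  rcases Nat.exists_eq_add_of_lt (Nat.zero_lt_of_lt hij) with ⟨b, hj⟩
  subst hj
  cases i with
  | zero =>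
    have h0 : t = 0 := hti
    have := iv_succ_pos (n := n) (k := 0 + b) htj
    simp [h0] at this
  | succ a =>
    rcases mem_iv_succ_iff.1 hti with ⟨-, h2⟩
    rcases mem_iv_succ_iff.1 htj with ⟨h3, -⟩
    have hab : a + 1 ≤ 0 + b := by omega
    have hcast : ((a : ℝ≥0) + 1) ≤ ((0 + b : ℕ) : ℝ≥0) := by
      have := Nat.cast_le (α := ℝ≥0) |>.2 hab
      push_cast at this ⊢
      exact this
    exact absurd (h2.trans hcast) (not_le.2 h3)

lemma iv_disjoint (n : ℕ) : Pairwise (Function.onFun Disjoint (iv n)) := by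
  intro i j hij
  rw [Function.onFun, Set.disjoint_left]
  intro t hti htj
  rcases Nat.lt_or_ge i j with h | h
  · exact iv_lt_aux h hti htj
  · exact iv_lt_aux (lt_of_le_of_ne h (Ne.symm hij)) htj hti

lemma mem_iv_ceil {n : ℕ} {t : ℝ≥0} (ht : t ≠ 0) :
    t ∈ iv n ⌈t * ((n : ℝ≥0) + 1)⌉₊ := by
  set x := t * ((n : ℝ≥0) + 1) with hx
  have hxpos : 0 < x := by positivity
  have hc : 1 ≤ ⌈x⌉₊ := Nat.one_le_iff_ne_zero.2 (by
    simp only [ne_eq, Nat.ceil_eq_zero, not_le]; exact hxpos)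
  obtain ⟨c, hc'⟩ : ∃ c, ⌈x⌉₊ = c + 1 := ⟨⌈x⌉₊ - 1, by omega⟩
  rw [hc']
  rw [mem_iv_succ_iff, ← hx]
  constructor
  · have : (c : ℝ≥0) < x := Nat.lt_ceil.1 (by omega)
    exact this
  · have := Nat.le_ceil x
    rw [hc'] at this
    push_cast at this
    exact this

lemma iUnion_iv_succ (n : ℕ) : (⋃ k, iv n (k + 1)) = Set.Ioi (0 : ℝ≥0) := by
  ext t
  simp only [Set.mem_iUnion, Set.mem_Ioi]
  constructor
  · rintro ⟨k, hk⟩; exact iv_succ_pos hk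
  · intro ht
    have h := mem_iv_ceil (n := n) (t := t) (by exact ne_of_gt ht)
    have hc : 1 ≤ ⌈t * ((n : ℝ≥0) + 1)⌉₊ := Nat.one_le_iff_ne_zero.2 (by
      simp only [ne_eq, Nat.ceil_eq_zero, not_le]; positivity)
    exact ⟨⌈t * ((n : ℝ≥0) + 1)⌉₊ - 1, by rwa [Nat.sub_add_cancel hc]⟩

lemma iUnion_iv (n : ℕ) : (⋃ k, iv n k) = Set.univ := by
  ext t
  simp only [Set.mem_iUnion, Set.mem_univ, iff_true]
  rcases eq_or_ne t 0 with rfl | ht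
  · exact ⟨0, rfl⟩
  · exact ⟨_, mem_iv_ceil ht⟩

lemma toSM_apply (μ : Measure ℝ≥0) [IsFiniteMeasure μ] {A : Set ℝ≥0} (hA : MeasurableSet A) :
    μ.toSignedMeasure A = (μ A).toReal :=
  Measure.toSignedMeasure_apply_measurable hA

lemma toSM_nonneg (μ : Measure ℝ≥0) [IsFiniteMeasure μ] :
    (0 : SignedMeasure ℝ≥0) ≤ μ.toSignedMeasure := by
  rw [VectorMeasure.le_iff]
  intro A hA
  rw [VectorMeasure.zero_apply, toSM_apply μ hA]
  exact ENNReal.toReal_nonneg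

lemma restrict_toSM_nonneg (μ : Measure ℝ≥0) [IsFiniteMeasure μ] {A : Set ℝ≥0}
    (hA : MeasurableSet A) : (0 : SignedMeasure ℝ≥0) ≤ μ.toSignedMeasure.restrict A := by
  rw [VectorMeasure.le_iff]
  intro B hB
  rw [VectorMeasure.zero_apply, VectorMeasure.restrict_apply _ hA hB, toSM_apply μ (hB.inter hA)]
  exact ENNReal.toReal_nonneg

lemma hasSum_iv (μ : Measure ℝ≥0) [IsFiniteMeasure μ] (n : ℕ) {A : Set ℝ≥0}
    (hA : MeasurableSet A) :
    HasSum (fun k => (μ (A ∩ iv n k)).toReal) ((μ A).toReal) := by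
  have hd : μ A = ∑' k, μ (A ∩ iv n k) := by
    rw [← measure_iUnion
      (fun i j hij => ((iv_disjoint n) hij).mono Set.inter_subset_right Set.inter_subset_right)
      (fun k => hA.inter (iv_measurable n k)), ← Set.inter_iUnion, iUnion_iv, Set.inter_univ]
  have hne : (∑' k, μ (A ∩ iv n k)) ≠ ⊤ := by rw [← hd]; exact measure_ne_top μ A
  have h1 := ENNReal.hasSum_toReal hne
  rwa [hd, ENNReal.tsum_toReal_eq (fun k => measure_ne_top μ _)]

lemma isSumOf_iv (μ : Measure ℝ≥0) [IsFiniteMeasure μ] (n : ℕ) :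
    IsSumOf μ.toSignedMeasure (fun k => μ.toSignedMeasure.restrict (iv n k)) := by
  intro A hA
  have h1 : (fun k => μ.toSignedMeasure.restrict (iv n k) A)
      = fun k => (μ (A ∩ iv n k)).toReal := by
    funext k
    rw [VectorMeasure.restrict_apply _ (iv_measurable n k) hA, toSM_apply μ (hA.inter (iv_measurable n k))]
  rw [h1, toSM_apply μ hA]
  exact hasSum_iv μ n hA

open scoped Classical in
lemma restrict_singleton_zero (μ : Measure ℝ≥0) [IsFiniteMeasure μ] :
    μ.toSignedMeasure.restrict {0} = (μ {0}).toReal • uzcb 0 := by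
  apply VectorMeasure.ext
  intro A hA
  rw [VectorMeasure.restrict_apply _ (measurableSet_singleton 0) hA,
    VectorMeasure.smul_apply, uzcb_apply 0 hA, toSM_apply μ (hA.inter (measurableSet_singleton 0))]
  by_cases h : 0 ∈ A
  · rw [if_pos h, Set.inter_eq_self_of_subset_right (Set.singleton_subset_iff.2 h)]
    simp
  · rw [if_neg h]
    have : A ∩ {0} = ∅ := by
      ext x; simp only [Set.mem_inter_iff, Set.mem_singleton_iff, Set.mem_empty_iff_false,
        iff_false, not_and]
      rintro hx rfl; exact h hx
    simp [this]

lemma pi_toSM {r : SignedMeasure ℝ≥0 → SignedMeasure ℝ≥0 → Prop}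
    (hM : IsMarket r) (hNA : NoArb r)
    {π : SignedMeasure ℝ≥0 → ℝ}
    (hπ : ∀ γ : SignedMeasure ℝ≥0, r γ (π γ • uzcb 0))
    {P : ℝ≥0 → ℝ} (hP : ∀ t, P t = π (uzcb t))
    (hPcont : Continuous P) (hPbdd : ∃ M : ℝ, ∀ t, P t ≤ M) (hPpos : ∀ t, 0 < P t)
    (havg : ∀ γ : SignedMeasure ℝ≥0, 0 ≤ γ → ∀ s t : ℝ≥0, s < t →
      ∃ b : ℝ, sInf (P '' Set.Icc s t) ≤ b ∧ b ≤ sSup (P '' Set.Icc s t) ∧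
        π (γ.restrict (Set.Ioc s t)) = b * γ (Set.Ioc s t))
    (hσ : ∀ β γ : ℕ → SignedMeasure ℝ≥0, (∀ k, 0 ≤ β k) → (∀ k, 0 ≤ γ k) →
      (∀ k, r (β k) (γ k)) → ∀ B G : SignedMeasure ℝ≥0, 0 ≤ B → 0 ≤ G →
      IsSumOf B β → IsSumOf G γ → r B G)
    (μ : Measure ℝ≥0) [IsFiniteMeasure μ] :
    π μ.toSignedMeasure = ∫ t, P t ∂μ := by
  obtain ⟨M, hMb⟩ := hPbdd
  set C : ℝ := max M 1 with hCdef
  have hC1 : (1 : ℝ) ≤ C := le_max_right _ _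
  have hPleC : ∀ t, P t ≤ C := fun t => (hMb t).trans (le_max_left _ _)
  have hP0 : P 0 = 1 := by
    rw [hP 0]
    exact price_unique hM hNA (hπ _) (by rw [one_smul]; exact hM.1 (uzcb 0))
  have hpos : (0 : SignedMeasure ℝ≥0) ≤ μ.toSignedMeasure := toSM_nonneg μ
  have hlt : ∀ n k : ℕ, ((k : ℝ≥0) / ((n : ℝ≥0) + 1)) < (((k : ℝ≥0) + 1) / ((n : ℝ≥0) + 1)) := by
    intro n k
    rw [div_lt_div_iff_of_pos_right (np1_pos n)]
    exact lt_add_one _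
  choose b hbl hbu hbeq using fun (n k : ℕ) =>
    havg μ.toSignedMeasure hpos ((k : ℝ≥0) / ((n : ℝ≥0) + 1))
      (((k : ℝ≥0) + 1) / ((n : ℝ≥0) + 1)) (hlt n k)
  have hIccne : ∀ n k : ℕ,
      (P '' Set.Icc ((k : ℝ≥0) / ((n : ℝ≥0) + 1)) (((k : ℝ≥0) + 1) / ((n : ℝ≥0) + 1))).Nonempty :=
    fun n k => (Set.nonempty_Icc.2 (hlt n k).le).image P
  have hbnn : ∀ n k, 0 ≤ b n k := fun n k =>
    le_trans (Real.sInf_nonneg (fun x hx => by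
      obtain ⟨y, -, rfl⟩ := hx; exact (hPpos y).le)) (hbl n k)
  have hbleC : ∀ n k, b n k ≤ C := fun n k =>
    (hbu n k).trans (csSup_le (hIccne n k) (fun x hx => by
      obtain ⟨y, -, rfl⟩ := hx; exact hPleC y))
  -- the value of each piece
  have hq0 : ∀ n : ℕ, π (μ.toSignedMeasure.restrict (iv n 0)) = (μ {0}).toReal := by
    intro n
    rw [show iv n 0 = {0} from rfl, restrict_singleton_zero, pi_smul_uzcb hM hNA hπ]
  have hqs : ∀ n k : ℕ, π (μ.toSignedMeasure.restrict (iv n (k + 1)))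
      = b n k * (μ (iv n (k + 1))).toReal := by
    intro n k
    have h1 := hbeq n k
    rw [show iv n (k+1) = Set.Ioc ((k : ℝ≥0) / ((n : ℝ≥0) + 1))
        (((k : ℝ≥0) + 1) / ((n : ℝ≥0) + 1)) from rfl]
    rw [h1, toSM_apply μ measurableSet_Ioc]
  have hqnn : ∀ n k : ℕ, 0 ≤ π (μ.toSignedMeasure.restrict (iv n k)) := by
    intro n k
    cases k with
    | zero => rw [hq0]; exact ENNReal.toReal_nonneg
    | succ k => rw [hqs]; exact mul_nonneg (hbnn n k) ENNReal.toReal_nonneg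
  have hmsum : ∀ n : ℕ, Summable (fun k => (μ (iv n k)).toReal) := by
    intro n
    have := hasSum_iv μ n MeasurableSet.univ
    simp only [Set.univ_inter] at this
    exact this.summable
  have hqle : ∀ n k : ℕ, π (μ.toSignedMeasure.restrict (iv n k)) ≤ C * (μ (iv n k)).toReal := by
    intro n k
    cases k with
    | zero =>
      rw [hq0, show iv n 0 = {0} from rfl]
      nlinarith [ENNReal.toReal_nonneg (a := μ {0})]
    | succ k =>
      rw [hqs]
      exact mul_le_mul_of_nonneg_right (hbleC n k) ENNReal.toReal_nonneg
  have hqsum : ∀ n : ℕ, Summable (fun k => π (μ.toSignedMeasure.restrict (iv n k))) :=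
    fun n => Summable.of_nonneg_of_le (hqnn n) (hqle n) ((hmsum n).mul_left C)
  -- the σ-additivity argument
  have hrS : ∀ n : ℕ, r μ.toSignedMeasure
      ((∑' k, π (μ.toSignedMeasure.restrict (iv n k))) • uzcb 0) := by
    intro n
    refine hσ (fun k => μ.toSignedMeasure.restrict (iv n k))
      (fun k => π (μ.toSignedMeasure.restrict (iv n k)) • uzcb 0)
      (fun k => restrict_toSM_nonneg μ (iv_measurable n k))
      (fun k => smul_uzcb_nonneg (hqnn n k) 0)
      (fun k => hπ _) _ _ hpos
      (smul_uzcb_nonneg (tsum_nonneg (hqnn n)) 0)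
      (isSumOf_iv μ n) ?_
    intro A hA
    simp only [VectorMeasure.smul_apply, smul_eq_mul]
    exact (hqsum n).hasSum.mul_right (uzcb 0 A)
  have hpiS : ∀ n : ℕ, π μ.toSignedMeasure
      = ∑' k, π (μ.toSignedMeasure.restrict (iv n k)) :=
    fun n => price_unique hM hNA (hπ _) (hrS n)
  have hSsplit : ∀ n : ℕ, π μ.toSignedMeasure
      = (μ {0}).toReal + ∑' k, b n k * (μ (iv n (k + 1))).toReal := by
    intro n
    rw [hpiS n, Summable.tsum_eq_zero_add (hqsum n), hq0 n]
    congr 1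
    exact tsum_congr fun k => hqs n k
  -- the approximating simple functions
  set g : ℕ → ℝ≥0 → ℝ := fun n t => b n (⌈t * ((n : ℝ≥0) + 1)⌉₊ - 1) with hgdef
  have hgeq : ∀ n k : ℕ, ∀ t : ℝ≥0, t ∈ iv n (k + 1) → g n t = b n k := by
    intro n k t ht
    have hceil : ⌈t * ((n : ℝ≥0) + 1)⌉₊ = k + 1 := by
      rw [Nat.ceil_eq_iff (Nat.succ_ne_zero k)]
      rcases mem_iv_succ_iff.1 ht with ⟨h1, h2⟩
      refine ⟨by simpa using h1, by push_cast; exact h2⟩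
    simp only [hgdef, hceil, Nat.add_sub_cancel]
  have hidx : ∀ n : ℕ, Measurable (fun t : ℝ≥0 => ⌈t * ((n : ℝ≥0) + 1)⌉₊) := by
    intro n
    apply measurable_to_countable'
    intro j
    cases j with
    | zero =>
      have hpre : (fun t : ℝ≥0 => ⌈t * ((n : ℝ≥0) + 1)⌉₊) ⁻¹' {0} = {0} := by
        ext t
        simp only [Set.mem_preimage, Set.mem_singleton_iff, Nat.ceil_eq_zero]
        constructor
        · intro h
          have : t * ((n : ℝ≥0) + 1) = 0 := le_antisymm h zero_le
          rcases mul_eq_zero.1 this with h' | h'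
          · exact h'
          · exact absurd h' (ne_of_gt (np1_pos n))
        · rintro rfl; simp
      rw [hpre]; exact measurableSet_singleton 0
    | succ k =>
      have hpre : (fun t : ℝ≥0 => ⌈t * ((n : ℝ≥0) + 1)⌉₊) ⁻¹' {k + 1} = iv n (k + 1) := by
        ext t
        simp only [Set.mem_preimage, Set.mem_singleton_iff]
        rw [Nat.ceil_eq_iff (Nat.succ_ne_zero k), mem_iv_succ_iff]
        constructor
        · rintro ⟨h1, h2⟩
          exact ⟨by simpa using h1, by push_cast at h2 ⊢; exact h2⟩
        · rintro ⟨h1, h2⟩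
          exact ⟨by simpa using h1, by push_cast; exact h2⟩
      rw [hpre]; exact iv_measurable n (k + 1)
  have hgmeas : ∀ n : ℕ, Measurable (g n) := by
    intro n
    exact (measurable_from_top (f := fun j : ℕ => b n (j - 1))).comp (hidx n)
  have hgbd : ∀ n : ℕ, ∀ t : ℝ≥0, ‖g n t‖ ≤ C := by
    intro n t
    rw [Real.norm_eq_abs, abs_of_nonneg (hbnn n _)]
    exact hbleC n _
  have hgint : ∀ n : ℕ, Integrable (g n) μ := fun n =>
    Integrable.mono' (integrable_const C) (hgmeas n).aestronglyMeasurable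
      (Filter.Eventually.of_forall (hgbd n))
  have hTint : ∀ n : ℕ, ∫ t in Set.Ioi (0 : ℝ≥0), g n t ∂μ
      = ∑' k, b n k * (μ (iv n (k + 1))).toReal := by
    intro n
    rw [← iUnion_iv_succ n,
      MeasureTheory.integral_iUnion (fun k => iv_measurable n (k + 1))
        (fun i j hij => (iv_disjoint n) (by omega : i + 1 ≠ j + 1))
        ((hgint n).integrableOn)]
    refine tsum_congr fun k => ?_
    rw [setIntegral_congr_fun (iv_measurable n (k + 1)) (fun t ht => hgeq n k t ht),
      setIntegral_const, smul_eq_mul, mul_comm, measureReal_def]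
  -- pointwise convergence
  have hglim : ∀ t : ℝ≥0, 0 < t →
      Filter.Tendsto (fun n => g n t) Filter.atTop (nhds (P t)) := by
    intro t ht
    rw [Metric.tendsto_atTop]
    intro ε hε
    obtain ⟨d, hd, hball⟩ := Metric.continuousAt_iff.1 (hPcont.continuousAt (x := t))
      (ε / 2) (by linarith)
    obtain ⟨N, hN⟩ := exists_nat_gt (1 / d)
    refine ⟨N, fun n hn => ?_⟩
    obtain ⟨k, hk⟩ : ∃ k, t ∈ iv n (k + 1) := by
      have h1 : t ∈ ⋃ k, iv n (k + 1) := by rw [iUnion_iv_succ n]; exact ht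
      simpa using h1
    rw [hgeq n k t hk]
    rcases mem_iv_succ_iff.1 hk with ⟨hk1, hk2⟩
    -- every point of the closed interval is within d of t
    have hdist : ∀ x : ℝ≥0, x ∈ Set.Icc ((k : ℝ≥0) / ((n : ℝ≥0) + 1))
        (((k : ℝ≥0) + 1) / ((n : ℝ≥0) + 1)) → dist (P x) (P t) < ε / 2 := by
      intro x hx
      apply hball
      have htlb : ((k : ℝ≥0) / ((n : ℝ≥0) + 1) : ℝ) ≤ (t : ℝ) := by
        have := (div_lt_iff₀ (np1_pos n)).2 hk1
        exact_mod_cast this.le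
      have htub : (t : ℝ) ≤ (((k : ℝ≥0) + 1) / ((n : ℝ≥0) + 1) : ℝ) := by
        have := (le_div_iff₀ (np1_pos n)).2 hk2
        exact_mod_cast this
      have hxlb : ((k : ℝ≥0) / ((n : ℝ≥0) + 1) : ℝ) ≤ (x : ℝ) := by exact_mod_cast hx.1
      have hxub : (x : ℝ) ≤ (((k : ℝ≥0) + 1) / ((n : ℝ≥0) + 1) : ℝ) := by exact_mod_cast hx.2
      have hlen : (((k : ℝ≥0) + 1) / ((n : ℝ≥0) + 1) : ℝ) - ((k : ℝ≥0) / ((n : ℝ≥0) + 1) : ℝ)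
          = 1 / ((n : ℝ) + 1) := by
        push_cast
        field_simp
        ring
      have hsmall : 1 / ((n : ℝ) + 1) < d := by
        rw [div_lt_iff₀ (by positivity)]
        rw [div_lt_iff₀ hd] at hN
        have : (N : ℝ) ≤ (n : ℝ) := Nat.cast_le.2 hn
        nlinarith
      rw [NNReal.dist_eq]
      rw [abs_sub_lt_iff]
      constructor <;> linarith
    have hPtmem : P t ∈ P '' Set.Icc ((k : ℝ≥0) / ((n : ℝ≥0) + 1))
        (((k : ℝ≥0) + 1) / ((n : ℝ≥0) + 1)) := by
      refine ⟨t, ⟨?_, hk2 |> fun h => (le_div_iff₀ (np1_pos n)).2 h⟩, rfl⟩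
      exact ((div_lt_iff₀ (np1_pos n)).2 hk1).le
    have hsup : sSup (P '' Set.Icc ((k : ℝ≥0) / ((n : ℝ≥0) + 1))
        (((k : ℝ≥0) + 1) / ((n : ℝ≥0) + 1))) ≤ P t + ε / 2 := by
      refine csSup_le (hIccne n k) (fun y hy => ?_)
      obtain ⟨x, hx, rfl⟩ := hy
      have := hdist x hx
      rw [Real.dist_eq, abs_sub_lt_iff] at this
      linarith [this.1]
    have hinf : P t - ε / 2 ≤ sInf (P '' Set.Icc ((k : ℝ≥0) / ((n : ℝ≥0) + 1))
        (((k : ℝ≥0) + 1) / ((n : ℝ≥0) + 1))) := by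
      refine le_csInf (hIccne n k) (fun y hy => ?_)
      obtain ⟨x, hx, rfl⟩ := hy
      have := hdist x hx
      rw [Real.dist_eq, abs_sub_lt_iff] at this
      linarith [this.2]
    rw [Real.dist_eq, abs_sub_lt_iff]
    constructor
    · linarith [hbu n k]
    · linarith [hbl n k]
  -- dominated convergence
  have hDCT : Filter.Tendsto (fun n => ∫ t in Set.Ioi (0 : ℝ≥0), g n t ∂μ) Filter.atTop
      (nhds (∫ t in Set.Ioi (0 : ℝ≥0), P t ∂μ)) := by
    refine MeasureTheory.tendsto_integral_of_dominated_convergence (fun _ => C)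
      (fun n => (hgmeas n).aestronglyMeasurable)
      (integrable_const C)
      (fun n => Filter.Eventually.of_forall (fun t => hgbd n t))
      ?_
    rw [ae_restrict_iff' measurableSet_Ioi]
    exact Filter.Eventually.of_forall (fun t ht => hglim t ht)
  -- conclusion
  have hconst : ∀ n : ℕ, ∫ t in Set.Ioi (0 : ℝ≥0), g n t ∂μ
      = π μ.toSignedMeasure - (μ {0}).toReal := by
    intro n
    rw [hTint n]
    have := hSsplit n
    linarith
  have hTc : Filter.Tendsto (fun n : ℕ => ∫ t in Set.Ioi (0 : ℝ≥0), g n t ∂μ) Filter.atTop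
      (nhds (π μ.toSignedMeasure - (μ {0}).toReal)) := by
    simp only [hconst]
    exact tendsto_const_nhds
  have hkey : π μ.toSignedMeasure - (μ {0}).toReal = ∫ t in Set.Ioi (0 : ℝ≥0), P t ∂μ :=
    tendsto_nhds_unique hTc hDCT
  have hPint : Integrable P μ :=
    Integrable.mono' (integrable_const C) hPcont.measurable.aestronglyMeasurable
      (Filter.Eventually.of_forall (fun t => by
        rw [Real.norm_eq_abs, abs_of_nonneg (hPpos t).le]; exact hPleC t))
  have hcompl : ({0} : Set ℝ≥0)ᶜ = Set.Ioi 0 := by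
    ext t
    simp [pos_iff_ne_zero]
  have hsplit : (∫ t in ({0} : Set ℝ≥0), P t ∂μ) + ∫ t in (({0} : Set ℝ≥0)ᶜ), P t ∂μ
      = ∫ t, P t ∂μ := integral_add_compl (measurableSet_singleton 0) hPint
  have hzero : (∫ t in ({0} : Set ℝ≥0), P t ∂μ) = (μ {0}).toReal := by
    rw [setIntegral_congr_fun (measurableSet_singleton 0)
      (fun t ht => by rw [Set.mem_singleton_iff] at ht; rw [ht, hP0] : Set.EqOn P (fun _ => (1:ℝ)) {0}),
      setIntegral_const, smul_eq_mul, mul_one, measureReal_def]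
  rw [hcompl] at hsplit
  linarith

theorem choquet_general' (r : SignedMeasure ℝ≥0 → SignedMeasure ℝ≥0 → Prop)
    (hM : IsMarket r) (hNA : NoArb r)
    (π : SignedMeasure ℝ≥0 → ℝ)
    (hπ : ∀ γ : SignedMeasure ℝ≥0, r γ (π γ • uzcb 0))
    (P : ℝ≥0 → ℝ) (hP : ∀ t, P t = π (uzcb t))
    (hPcont : Continuous P) (hPbdd : ∃ M : ℝ, ∀ t, P t ≤ M) (hPpos : ∀ t, 0 < P t)
    (havg : ∀ γ : SignedMeasure ℝ≥0, 0 ≤ γ → ∀ s t : ℝ≥0, s < t →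
      ∃ b : ℝ, sInf (P '' Set.Icc s t) ≤ b ∧ b ≤ sSup (P '' Set.Icc s t) ∧
        π (γ.restrict (Set.Ioc s t)) = b * γ (Set.Ioc s t))
    (hσ : ∀ β γ : ℕ → SignedMeasure ℝ≥0, (∀ k, 0 ≤ β k) → (∀ k, 0 ≤ γ k) →
      (∀ k, r (β k) (γ k)) → ∀ B G : SignedMeasure ℝ≥0, 0 ≤ B → 0 ≤ G →
      IsSumOf B β → IsSumOf G γ → r B G) :
    ∀ γ : SignedMeasure ℝ≥0, π γ = (∫ t, P t ∂γ.toJordanDecomposition.posPart) -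
    ∫ t, P t ∂γ.toJordanDecomposition.negPart := by
  intro γ
  have hposInt := pi_toSM hM hNA hπ hP hPcont hPbdd hPpos havg hσ γ.toJordanDecomposition.posPart
  have hnegInt := pi_toSM hM hNA hπ hP hPcont hPbdd hPpos havg hσ γ.toJordanDecomposition.negPart
  have h1 : γ + γ.toJordanDecomposition.negPart.toSignedMeasure
      = γ.toJordanDecomposition.posPart.toSignedMeasure := by
    have h := γ.toSignedMeasure_toJordanDecomposition
    rw [JordanDecomposition.toSignedMeasure] at h
    have h2 : γ.toJordanDecomposition.posPart.toSignedMeasure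
        - γ.toJordanDecomposition.negPart.toSignedMeasure
        + γ.toJordanDecomposition.negPart.toSignedMeasure
        = γ.toJordanDecomposition.posPart.toSignedMeasure := by abel
    rw [h] at h2
    exact h2
  have h2 := pi_add hM hNA hπ γ γ.toJordanDecomposition.negPart.toSignedMeasure
  rw [h1, hposInt, hnegInt] at h2
  linarith


/-- Choquet formula for general cash flows. Under NA, (A1) continuous bounded
strictly positive UZCB prices, (A2) the average value requirement, and (A3) σ-additivity of
the exchange relation, the NA price of every cash flow is π(γ) = ∫₀^∞ P_t dγ(t). -/
theorem choquet_general (r : SignedMeasure ℝ≥0 → SignedMeasure ℝ≥0 → Prop)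
    (hM : IsMarket r) (hNA : NoArb r)
    (π : SignedMeasure ℝ≥0 → ℝ)
    (hπ : ∀ γ : SignedMeasure ℝ≥0, r γ (π γ • uzcb 0))
    (P : ℝ≥0 → ℝ) (hP : ∀ t, P t = π (uzcb t))
    (hPcont : Continuous P) (hPbdd : ∃ M : ℝ, ∀ t, P t ≤ M) (hPpos : ∀ t, 0 < P t)
    (havg : ∀ γ : SignedMeasure ℝ≥0, 0 ≤ γ → ∀ s t : ℝ≥0, s < t →
      ∃ b : ℝ, sInf (P '' Set.Icc s t) ≤ b ∧ b ≤ sSup (P '' Set.Icc s t) ∧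
        π (γ.restrict (Set.Ioc s t)) = b * γ (Set.Ioc s t))
    (hσ : ∀ β γ : ℕ → SignedMeasure ℝ≥0, (∀ k, 0 ≤ β k) → (∀ k, 0 ≤ γ k) →
      (∀ k, r (β k) (γ k)) → ∀ B G : SignedMeasure ℝ≥0, 0 ≤ B → 0 ≤ G →
      IsSumOf B β → IsSumOf G γ → r B G) :
    ∀ γ : SignedMeasure ℝ≥0, π γ = sInt P γ := by
  intro γ
  have h := choquet_general' r hM hNA π hπ P hP hPcont hPbdd hPpos havg hσ γ
  rw [sInt]
  exact h
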